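/- Let P : ℝ^d → Mat_N(ℂ) be smooth. (1) If (w₀,λ₀) ∈ Ω₁(P) \ Ξ(P), then there exist a neighborhood U of w₀ in ℝ^d, a neighborhood W of (w₀,λ₀) in ℝ^d × ℂ, and a smooth function λ : U → ℂ with λ(w₀) = λ₀ such that for all (w,μ) ∈ W one has det(P(w) − μI) = 0 if and only if μ = λ(w); moreover any two smooth functions with this property agree on a neighborhood of w₀. (2) If λ₀ ∈ Σ(P) \ (Σ_ws(P) ∪ Σ_∞(P)), then there exist an open set U ⊇ Σ_{λ₀}(P), a neighborhood W of Σ_{λ₀}(P) × {λ₀} in ℝ^d × ℂ, and a smooth λ : U → ℂ such that for all (w,μ) ∈ W one has det(P(w) − μI) = 0 if and only if μ = λ(w). -/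

import Mathlib

open Filter Topology Matrix

variable {E : Type*} [NormedAddCommGroup E] {N : ℕ}

/-- The characteristic determinant `p(w, z) = det (P(w) − z I)`. -/
noncomputable def charDet (P : E → Matrix (Fin N) (Fin N) ℂ) (w : E) (z : ℂ) : ℂ :=
  (P w - z • (1 : Matrix (Fin N) (Fin N) ℂ)).det

/-- `K_P(w, z)`: the largest `k` such that `∂_z^j p(w, z) = 0` for all `j < k`. -/
noncomputable def KP (P : E → Matrix (Fin N) (Fin N) ℂ) (w : E) (z : ℂ) : ℕ :=
  sSup {k : ℕ | ∀ j < k, iteratedDeriv j (charDet P w) z = 0}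

/-- `Ω_k(P) = {(w, z) : K_P(w, z) ≥ k}`. -/
noncomputable def OmegaSet (P : E → Matrix (Fin N) (Fin N) ℂ) (k : ℕ) : Set (E × ℂ) :=
  {p : E × ℂ | k ≤ KP P p.1 p.2}

/-- `Ξ(P) = ⋃_{j ≥ 2} ∂Ω_j(P)`, boundaries taken relative to `Ω_1(P)`. -/
noncomputable def XiSet (P : E → Matrix (Fin N) (Fin N) ℂ) : Set (E × ℂ) :=
  ⋃ j : ℕ, ⋃ _ : 2 ≤ j,
    Subtype.val '' frontier {q : OmegaSet P 1 | (q : E × ℂ) ∈ OmegaSet P j}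

/-- `Σ_z(P) = {w : det (P(w) − z I) = 0}`. -/
noncomputable def SigmaLam (P : E → Matrix (Fin N) (Fin N) ℂ) (z : ℂ) : Set E :=
  {w : E | charDet P w z = 0}

/-- `Σ(P)`: the closure of the set of eigenvalues of `P`. -/
noncomputable def SigmaSet (P : E → Matrix (Fin N) (Fin N) ℂ) : Set ℂ :=
  closure {z : ℂ | ∃ w : E, charDet P w z = 0}

/-- The weakly singular eigenvalue set `Σ_ws(P) = π₂(Ξ(P))`. -/
noncomputable def SigmaWs (P : E → Matrix (Fin N) (Fin N) ℂ) : Set ℂ :=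
  Prod.snd '' XiSet P

/-- The strongly singular eigenvalue set `Σ_ss(P)`. -/
noncomputable def SigmaSs (P : E → Matrix (Fin N) (Fin N) ℂ) : Set ℂ :=
  {z : ℂ | (SigmaLam P z).Nonempty ∧ ∀ w ∈ SigmaLam P z, (w, z) ∈ XiSet P}

/-- `Σ_∞(P)`: eigenvalues at infinity. -/
noncomputable def SigmaInf (P : E → Matrix (Fin N) (Fin N) ℂ) : Set ℂ :=
  {z : ℂ | ∃ (w : ℕ → E) (u : ℕ → EuclideanSpace ℂ (Fin N)),
    (∀ j, u j ≠ 0) ∧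
    Tendsto (fun j => ‖w j‖) atTop atTop ∧
    Tendsto (fun j => ‖Matrix.toEuclideanLin (P (w j)) (u j) - z • u j‖ / ‖u j‖)
      atTop (nhds 0)}


namespace GermEV
open Polynomial Matrix

noncomputable def polOf {N : ℕ} (M : Matrix (Fin N) (Fin N) ℂ) : ℂ[X] :=
  ((M.map C) - (X : ℂ[X]) • (1 : Matrix (Fin N) (Fin N) ℂ[X])).det

lemma polOf_eval {N : ℕ} (M : Matrix (Fin N) (Fin N) ℂ) (z : ℂ) :
    (polOf M).eval z = (M - z • (1 : Matrix (Fin N) (Fin N) ℂ)).det := by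
  rw [polOf, Polynomial.eval, ← coe_eval₂RingHom, RingHom.map_det]
  congr 1
  ext i j
  simp [Matrix.map_apply, Matrix.sub_apply, Matrix.smul_apply, Matrix.one_apply]
  split <;> simp

lemma polOf_eq {N : ℕ} (M : Matrix (Fin N) (Fin N) ℂ) :
    polOf M = (-1) ^ N * M.charpoly := by
  have h : (M.map C) - (X : ℂ[X]) • (1 : Matrix (Fin N) (Fin N) ℂ[X]) = -(charmatrix M) := by
    rw [charmatrix]
    ext i j
    rcases eq_or_ne i j with rfl | hij
    · simp [Matrix.map_apply, Matrix.sub_apply, Matrix.smul_apply, Matrix.one_apply,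
        Matrix.scalar]
    · simp [Matrix.map_apply, Matrix.sub_apply, Matrix.smul_apply, Matrix.one_apply,
        Matrix.scalar, Matrix.diagonal_apply_ne _ hij, hij]
  rw [polOf, h, Matrix.det_neg, charpoly]
  simp

lemma charpoly_natDeg {N : ℕ} (M : Matrix (Fin N) (Fin N) ℂ) :
    M.charpoly.natDegree = N := by
  simpa using Matrix.charpoly_natDegree_eq_dim M

lemma polOf_natDegree {N : ℕ} (M : Matrix (Fin N) (Fin N) ℂ) :
    (polOf M).natDegree ≤ N := by
  rw [polOf_eq]
  calc ((-1)^N * M.charpoly).natDegree ≤ ((-1:ℂ[X])^N).natDegree + M.charpoly.natDegree :=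
      natDegree_mul_le
  _ ≤ N := by
      have h1 : ((-1:ℂ[X])^N).natDegree = 0 := by
        simp [natDegree_pow]
      rw [h1, charpoly_natDeg]; omega

lemma polOf_coeff_N {N : ℕ} (M : Matrix (Fin N) (Fin N) ℂ) :
    (polOf M).coeff N = (-1) ^ N := by
  rw [polOf_eq]
  have h1 : M.charpoly.Monic := Matrix.charpoly_monic M
  have h3 : M.charpoly.coeff N = 1 := by
    have := h1.coeff_natDegree
    rwa [charpoly_natDeg] at this
  have : ((-1:ℂ[X])^N) = C ((-1:ℂ)^N) := by simp
  rw [this, coeff_C_mul, h3, mul_one]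

lemma iteratedDeriv_polyeval (p : ℂ[X]) (j : ℕ) :
    iteratedDeriv j (fun z => p.eval z) = fun z => (Polynomial.derivative^[j] p).eval z := by
  induction j generalizing p with
  | zero => simp
  | succ n ih =>
    rw [iteratedDeriv_succ', Function.iterate_succ_apply]
    have hd : (deriv fun z : ℂ => p.eval z) = fun z => (Polynomial.derivative p).eval z :=
      funext fun _ => Polynomial.deriv _
    rw [hd, ih]

lemma multiset_pow_card_le_prod (s : Multiset ℝ) (δ : ℝ) (hδ : 0 ≤ δ)
    (h : ∀ x ∈ s, δ ≤ x) : δ ^ Multiset.card s ≤ s.prod := by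
  induction s using Multiset.induction with
  | empty => simp
  | cons a s ih =>
    simp only [Multiset.card_cons, Multiset.prod_cons, pow_succ]
    have ha := h a (Multiset.mem_cons_self a s)
    have h' : ∀ x ∈ s, δ ≤ x := fun x hx => h x (Multiset.mem_cons_of_mem hx)
    have hs := ih h'
    calc δ ^ Multiset.card s * δ ≤ s.prod * a := by
          apply mul_le_mul hs ha hδ
          exact Multiset.prod_nonneg fun x hx => le_trans hδ (h' x hx)
    _ = a * s.prod := mul_comm _ _

-- root proximity
lemma exists_root_near {N : ℕ} (M : Matrix (Fin N) (Fin N) ℂ) (z₀ : ℂ) (δ : ℝ)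
    (hδ : 0 < δ) (h : ‖(M - z₀ • (1 : Matrix (Fin N) (Fin N) ℂ)).det‖ < δ ^ N) :
    ∃ r : ℂ, (M - r • (1 : Matrix (Fin N) (Fin N) ℂ)).det = 0 ∧ ‖r - z₀‖ < δ := by
  by_contra hcon
  push_neg at hcon
  have hmono : M.charpoly.Monic := Matrix.charpoly_monic M
  have hsplit : M.charpoly.Splits := IsAlgClosed.splits _
  have hcard : Multiset.card M.charpoly.roots = N := by
    rw [Polynomial.splits_iff_card_roots.mp hsplit]
    simpa using Matrix.charpoly_natDegree_eq_dim M
  have heval : M.charpoly.eval z₀ = ((M.charpoly.roots).map (fun r => z₀ - r)).prod := by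
    conv_lhs => rw [hsplit.eq_prod_roots_of_monic hmono]
    rw [Polynomial.eval_multiset_prod]
    simp [Multiset.map_map, Function.comp_def]
  -- each root r of charpoly gives det (M - r•1) = 0
  have hroot : ∀ r ∈ M.charpoly.roots, δ ≤ ‖z₀ - r‖ := by
    intro r hr
    have : M.charpoly.eval r = 0 := Polynomial.isRoot_of_mem_roots hr
    have hdet : (M - r • (1 : Matrix (Fin N) (Fin N) ℂ)).det = 0 := by
      have h1 : (M - r • (1 : Matrix (Fin N) (Fin N) ℂ)).det = ((-1:ℂ))^N * M.charpoly.eval r := by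
        rw [← polOf_eval, polOf_eq]
        simp
      rw [h1, this, mul_zero]
    have := hcon r hdet
    rwa [← norm_neg, neg_sub] at this
  have hbig : δ ^ N ≤ ‖M.charpoly.eval z₀‖ := by
    rw [heval]
    have : ‖((M.charpoly.roots).map (fun r => z₀ - r)).prod‖
        = (((M.charpoly.roots).map (fun r => ‖z₀ - r‖))).prod := by
      rw [← normHom_apply, map_multiset_prod (normHom : ℂ →*₀ ℝ), Multiset.map_map]
      rfl
    rw [this]
    have := multiset_pow_card_le_prod (((M.charpoly.roots).map (fun r => ‖z₀ - r‖)))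
      δ hδ.le (by intro x hx; obtain ⟨r, hr, rfl⟩ := Multiset.mem_map.mp hx; exact hroot r hr)
    simpa [hcard] using this
  have habs : ‖(M - z₀ • (1 : Matrix (Fin N) (Fin N) ℂ)).det‖
      = ‖M.charpoly.eval z₀‖ := by
    rw [← polOf_eval, polOf_eq, Polynomial.eval_mul]
    rw [norm_mul]
    simp
  rw [habs] at h
  linarith

section S3
variable {E' : Type*} [NormedAddCommGroup E'] [NormedSpace ℝ E'] {N : ℕ}

lemma charDet_eq_eval (P : E' → Matrix (Fin N) (Fin N) ℂ) (w : E') :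
    charDet P w = fun z => (polOf (P w)).eval z :=
  funext fun z => (polOf_eval (P w) z).symm

lemma contDiff_charDet_fixed (P : E' → Matrix (Fin N) (Fin N) ℂ)
    (hs : ∀ i j, ContDiff ℝ (⊤:ℕ∞) fun w => P w i j) (z : ℂ) :
    ContDiff ℝ (⊤:ℕ∞) fun w => charDet P w z := by
  have h : (fun w => charDet P w z)
      = fun w => ∑ σ : Equiv.Perm (Fin N), (((Equiv.Perm.sign σ : ℤ) : ℂ)) *
          ∏ i, (P w (σ i) i - z * (1 : Matrix (Fin N) (Fin N) ℂ) (σ i) i) := by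
    funext w
    rw [charDet, Matrix.det_apply]
    congr 1
    funext σ
    rw [Units.smul_def, zsmul_eq_mul]
    simp [Matrix.sub_apply, Matrix.smul_apply, smul_eq_mul]
  rw [h]
  apply ContDiff.sum
  intro σ _
  apply ContDiff.mul contDiff_const
  apply contDiff_prod
  intro i _
  exact (hs _ _).sub contDiff_const

lemma contDiff_polOf_coeff (P : E' → Matrix (Fin N) (Fin N) ℂ)
    (hs : ∀ i j, ContDiff ℝ (⊤:ℕ∞) fun w => P w i j) (k : ℕ) :
    ContDiff ℝ (⊤:ℕ∞) fun w => (polOf (P w)).coeff k := by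
  classical
  set v : Fin (N+1) → ℂ := fun i => ((i : ℕ) : ℂ) with hv_def
  have hv : Set.InjOn v (Finset.univ : Finset (Fin (N+1))) := by
    intro a _ b _ hab
    simp only [hv_def] at hab
    exact Fin.val_injective (Nat.cast_injective hab)
  have hdeg : ∀ w, (polOf (P w)).degree < ((Finset.univ : Finset (Fin (N+1))).card : WithBot ℕ) := by
    intro w
    refine lt_of_le_of_lt (Polynomial.degree_le_natDegree) ?_
    have h1 : (polOf (P w)).natDegree ≤ N := polOf_natDegree _
    have : ((Finset.univ : Finset (Fin (N+1))).card : WithBot ℕ) = ((N+1 : ℕ) : WithBot ℕ) := by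
      norm_num
    rw [this]
    exact_mod_cast Nat.lt_succ_of_le h1
  have hrep : ∀ w, polOf (P w)
      = Lagrange.interpolate Finset.univ v (fun i => (polOf (P w)).eval (v i)) :=
    fun w => Lagrange.eq_interpolate hv (hdeg w)
  have h : (fun w => (polOf (P w)).coeff k) = fun w =>
      ∑ i : Fin (N+1), charDet P w (v i) * (Lagrange.basis Finset.univ v i).coeff k := by
    funext w
    conv_lhs => rw [hrep w]
    rw [Lagrange.interpolate_apply, Polynomial.finset_sum_coeff]
    congr 1
    funext i
    rw [Polynomial.coeff_C_mul, polOf_eval]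
    rfl
  rw [h]
  exact ContDiff.sum fun i _ => (contDiff_charDet_fixed P hs (v i)).mul contDiff_const

lemma contDiff_eval_of_coeff (F : E' → ℂ[X]) (hdeg : ∀ w, (F w).natDegree < N+1)
    (hc : ∀ k, ContDiff ℝ (⊤:ℕ∞) fun w => (F w).coeff k) :
    ContDiff ℝ (⊤:ℕ∞) fun p : E' × ℂ => (F p.1).eval p.2 := by
  have h : (fun p : E' × ℂ => (F p.1).eval p.2)
      = fun p => ∑ k ∈ Finset.range (N+1), (F p.1).coeff k * p.2 ^ k := by
    funext p
    exact Polynomial.eval_eq_sum_range' (hdeg p.1) p.2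
  rw [h]
  exact ContDiff.sum fun k _ => ((hc k).comp contDiff_fst).mul (contDiff_snd.pow k)

lemma contDiff_q (P : E' → Matrix (Fin N) (Fin N) ℂ)
    (hs : ∀ i j, ContDiff ℝ (⊤:ℕ∞) fun w => P w i j) (j : ℕ) :
    ContDiff ℝ (⊤:ℕ∞) fun p : E' × ℂ =>
      (Polynomial.derivative^[j] (polOf (P p.1))).eval p.2 := by
  refine contDiff_eval_of_coeff (N := N) (fun w => Polynomial.derivative^[j] (polOf (P w))) ?_ ?_
  · intro w
    exact lt_of_le_of_lt ((Polynomial.natDegree_iterate_derivative _ _).trans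
      ((Nat.sub_le _ _).trans (polOf_natDegree _))) (Nat.lt_succ_self N)
  · intro k
    have h : (fun w => (Polynomial.derivative^[j] (polOf (P w))).coeff k)
        = fun w => ((k+j).descFactorial j : ℂ) * (polOf (P w)).coeff (k+j) := by
      funext w
      rw [Polynomial.coeff_iterate_derivative, nsmul_eq_mul]
    rw [h]
    exact contDiff_const.mul (contDiff_polOf_coeff P hs _)

end S3
section S4
variable {E' : Type*} [NormedAddCommGroup E'] [NormedSpace ℝ E'] {N : ℕ}

lemma iteratedDeriv_charDet (P : E' → Matrix (Fin N) (Fin N) ℂ) (w : E') (j : ℕ) (z : ℂ) :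
    iteratedDeriv j (charDet P w) z = (Polynomial.derivative^[j] (polOf (P w))).eval z := by
  rw [charDet_eq_eval, iteratedDeriv_polyeval]

lemma iteratedDeriv_charDet_N (P : E' → Matrix (Fin N) (Fin N) ℂ) (w : E') (z : ℂ) :
    iteratedDeriv N (charDet P w) z = (Nat.factorial N : ℂ) * (-1) ^ N := by
  rw [iteratedDeriv_charDet]
  have hdeg : (Polynomial.derivative^[N] (polOf (P w))).natDegree = 0 :=
    Nat.le_zero.mp ((Polynomial.natDegree_iterate_derivative _ _).trans
      (by have := polOf_natDegree (P w); omega))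
  have := Polynomial.eq_C_of_natDegree_eq_zero hdeg
  rw [this, Polynomial.eval_C, Polynomial.coeff_iterate_derivative]
  simp [polOf_coeff_N, Nat.descFactorial_self, nsmul_eq_mul]

lemma iteratedDeriv_charDet_N_ne (P : E' → Matrix (Fin N) (Fin N) ℂ) (w : E') (z : ℂ) :
    iteratedDeriv N (charDet P w) z ≠ 0 := by
  rw [iteratedDeriv_charDet_N]
  exact mul_ne_zero (Nat.cast_ne_zero.mpr (Nat.factorial_ne_zero N))
    (pow_ne_zero _ (neg_ne_zero.mpr one_ne_zero))

lemma le_KP_iff (P : E' → Matrix (Fin N) (Fin N) ℂ) (w : E') (z : ℂ) (k : ℕ) :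
    k ≤ KP P w z ↔ ∀ j < k, iteratedDeriv j (charDet P w) z = 0 := by
  set S := {k : ℕ | ∀ j < k, iteratedDeriv j (charDet P w) z = 0} with hS
  have hbdd : ∀ m ∈ S, m ≤ N := by
    intro m hm
    by_contra hc
    exact iteratedDeriv_charDet_N_ne P w z (hm N (by omega))
  have h0 : (0 : ℕ) ∈ S := by intro j hj; omega
  constructor
  · intro hk j hj
    have hsup : sSup S ∈ S := Nat.sSup_mem ⟨0, h0⟩ ⟨N, hbdd⟩
    exact hsup j (lt_of_lt_of_le hj hk)
  · intro hk
    exact le_csSup ⟨N, hbdd⟩ hk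

lemma isClosed_omegaSet [NormedSpace ℝ E']
    (P : E' → Matrix (Fin N) (Fin N) ℂ)
    (hcont : ∀ j, Continuous fun p : E' × ℂ => iteratedDeriv j (charDet P p.1) p.2) (k : ℕ) :
    IsClosed (OmegaSet P k) := by
  have h : OmegaSet P k
      = ⋂ j ∈ Finset.range k, {p : E' × ℂ | iteratedDeriv j (charDet P p.1) p.2 = 0} := by
    ext p
    simp only [OmegaSet, Set.mem_setOf_eq, Set.mem_iInter, Finset.mem_range, le_KP_iff]
  rw [h]
  exact isClosed_biInter fun j _ => isClosed_eq (hcont j) continuous_const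

end S4
section S5
variable {E' : Type*} [NormedAddCommGroup E'] [NormedSpace ℝ E'] [CompleteSpace E']

lemma phi_hasFDerivAt (Q : E' × ℂ → ℂ) (hQ : ContDiff ℝ (⊤:ℕ∞) Q)
    (Qz : E' × ℂ → ℂ)
    (hQz : ∀ p : E' × ℂ, HasDerivAt (fun z => Q (p.1, z)) (Qz p) p.2)
    (p : E' × ℂ) (hc : Qz p ≠ 0) :
    ∃ e : (E' × ℂ) ≃L[ℝ] (E' × ℂ),
      HasFDerivAt (fun q : E' × ℂ => (q.1, Q q)) (e : (E' × ℂ) →L[ℝ] (E' × ℂ)) p := by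
  have hone : (1 : WithTop ℕ∞) ≤ ((⊤:ℕ∞) : WithTop ℕ∞) := by
    exact_mod_cast (le_top : (1:ℕ∞) ≤ ⊤)
  have hdiff : DifferentiableAt ℝ Q p := (hQ.differentiable (by simp)).differentiableAt
  set A := fderiv ℝ Q p with hA_def
  have hA : HasFDerivAt Q A p := hdiff.hasFDerivAt
  -- A (0, v) = v * Qz p
  have hmk : HasFDerivAt (fun z : ℂ => ((p.1, z) : E' × ℂ))
      (ContinuousLinearMap.inr ℝ E' ℂ) p.2 :=
    (hasFDerivAt_const p.1 p.2).prodMk (hasFDerivAt_id p.2)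
  have h1 : HasFDerivAt (fun z : ℂ => Q (p.1, z))
      (A.comp (ContinuousLinearMap.inr ℝ E' ℂ)) p.2 := hA.comp p.2 hmk
  have h2 : HasFDerivAt (fun z : ℂ => Q (p.1, z))
      (((ContinuousLinearMap.smulRight (1 : ℂ →L[ℂ] ℂ) (Qz p))).restrictScalars ℝ) p.2 :=
    ((hQz p).hasFDerivAt).restrictScalars ℝ
  have huniq := h1.unique h2
  have hc2 : ∀ v : ℂ, A (0, v) = v * Qz p := by
    intro v
    have := congrArg (fun (T : ℂ →L[ℝ] ℂ) => T v) huniq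
    simpa [smul_eq_mul] using this
  have hsplit : ∀ u v, A (u, v) = A (u, 0) + v * Qz p := by
    intro u v
    have : ((u, v) : E' × ℂ) = (u, 0) + (0, v) := by simp
    rw [this, map_add, hc2]
  -- build the equivalence
  set B : (E' × ℂ) →L[ℝ] ℂ :=
    (A.comp (ContinuousLinearMap.inl ℝ E' ℂ)).comp (ContinuousLinearMap.fst ℝ E' ℂ) with hB_def
  have hB : ∀ (x : E' × ℂ), B x = A (x.1, 0) := fun x => rfl
  set f : (E' × ℂ) →L[ℝ] (E' × ℂ) := (ContinuousLinearMap.fst ℝ E' ℂ).prod A with hf_def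
  set g : (E' × ℂ) →L[ℝ] (E' × ℂ) :=
    (ContinuousLinearMap.fst ℝ E' ℂ).prod
      ((Qz p)⁻¹ • (ContinuousLinearMap.snd ℝ E' ℂ - B)) with hg_def
  have h₁ : ∀ x, g (f x) = x := by
    rintro ⟨u, v⟩
    show (u, (Qz p)⁻¹ • (A (u, v) - B (u, A (u,v)))) = (u, v)
    rw [hB, hsplit]
    simp only [smul_eq_mul]
    field_simp; simp [hc]
  have h₂ : ∀ x, f (g x) = x := by
    rintro ⟨u, v⟩
    show (u, A (u, (Qz p)⁻¹ • (v - B (u,v)))) = (u, v)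
    rw [hB, hsplit]
    simp only [smul_eq_mul]
    field_simp; simp
  refine ⟨ContinuousLinearEquiv.equivOfInverse f g h₁ h₂, ?_⟩
  have : (ContinuousLinearEquiv.equivOfInverse f g h₁ h₂ : (E' × ℂ) →L[ℝ] (E' × ℂ)) = f := rfl
  rw [this, hf_def]
  exact hasFDerivAt_fst.prodMk hA

lemma ift_graph (Q : E' × ℂ → ℂ) (hQ : ContDiff ℝ (⊤:ℕ∞) Q)
    (Qz : E' × ℂ → ℂ) (hQz : ∀ p, HasDerivAt (fun z => Q (p.1, z)) (Qz p) p.2)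
    (hQzc : Continuous Qz)
    (a : E' × ℂ) (ha0 : Q a = 0) (haz : Qz a ≠ 0) :
    ∃ (V : Set (E' × ℂ)), IsOpen V ∧ a ∈ V ∧
    ∃ (O : Set E'), IsOpen O ∧ a.1 ∈ O ∧
    ∃ g : E' → ℂ, (∀ w ∈ O, ContDiffAt ℝ (⊤:ℕ∞) g w) ∧ g a.1 = a.2 ∧
      (∀ p ∈ V, Q p = 0 → p.2 = g p.1) := by
  have hone : (1 : WithTop ℕ∞) ≤ ((⊤:ℕ∞) : WithTop ℕ∞) := by
    exact_mod_cast (le_top : (1:ℕ∞) ≤ ⊤)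
  obtain ⟨e, he⟩ := phi_hasFDerivAt Q hQ Qz hQz a haz
  set Φ : E' × ℂ → E' × ℂ := fun q => (q.1, Q q) with hΦ_def
  have hΦc : ContDiff ℝ (⊤:ℕ∞) Φ := contDiff_fst.prodMk hQ
  set ph := hΦc.contDiffAt.toOpenPartialHomeomorph Φ he (by simp) with hph_def
  have hcoe : (ph : E' × ℂ → E' × ℂ) = Φ :=
    ContDiffAt.toOpenPartialHomeomorph_coe hΦc.contDiffAt he (by simp)
  have hasrc : a ∈ ph.source :=
    ContDiffAt.mem_toOpenPartialHomeomorph_source hΦc.contDiffAt he (by simp)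
  have hatgt : Φ a ∈ ph.target :=
    ContDiffAt.image_mem_toOpenPartialHomeomorph_target hΦc.contDiffAt he (by simp)
  have hΦa : Φ a = (a.1, 0) := by rw [hΦ_def]; simp [ha0]
  -- the candidate open set for smoothness
  set T' : Set (E' × ℂ) := ph.target ∩ ph.symm ⁻¹' {q | Qz q ≠ 0} with hT'_def
  have hne : IsOpen {q : E' × ℂ | Qz q ≠ 0} :=
    isOpen_compl_iff.mpr (isClosed_eq hQzc continuous_const)
  have hT'open : IsOpen T' :=
    ph.continuousOn_symm.isOpen_inter_preimage ph.open_target hne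
  set O : Set E' := (fun w : E' => ((w, 0) : E' × ℂ)) ⁻¹' T' with hO_def
  have hOopen : IsOpen O := hT'open.preimage (continuous_id.prodMk continuous_const)
  have haO : a.1 ∈ O := by
    have h1 : ((a.1, 0) : E' × ℂ) ∈ ph.target := by rw [← hΦa]; exact hatgt
    have h2 : ph.symm ((a.1, 0) : E' × ℂ) = a := by
      rw [← hΦa, ← hcoe]; exact ph.left_inv hasrc
    refine ⟨h1, ?_⟩
    simp only [Set.mem_preimage, Set.mem_setOf_eq, h2]
    exact haz
  set g : E' → ℂ := fun w => (ph.symm ((w, 0) : E' × ℂ)).2 with hg_def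
  refine ⟨ph.source, ph.open_source, hasrc, O, hOopen, haO, g, ?_, ?_, ?_⟩
  · -- smoothness
    intro w hw
    obtain ⟨hw1, hw2⟩ := hw
    set b : E' × ℂ := (w, 0) with hb_def
    have hb1 : b ∈ ph.target := hw1
    have hbz : Qz (ph.symm b) ≠ 0 := hw2
    obtain ⟨e', he'⟩ := phi_hasFDerivAt Q hQ Qz hQz (ph.symm b) hbz
    have hsymm : ContDiffAt ℝ (⊤:ℕ∞) ph.symm b := by
      apply ph.contDiffAt_symm hb1
      · rw [hcoe]; exact he'
      · rw [hcoe]; exact hΦc.contDiffAt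
    have hmk : ContDiffAt ℝ (⊤:ℕ∞) (fun w : E' => ((w, 0) : E' × ℂ)) w :=
      (contDiff_id.prodMk contDiff_const).contDiffAt
    exact (contDiff_snd.contDiffAt.comp _ (hsymm.comp w hmk) : _)
  · -- value at a.1
    have h2 : ph.symm ((a.1, 0) : E' × ℂ) = a := by
      rw [← hΦa, ← hcoe]; exact ph.left_inv hasrc
    rw [hg_def]; simp [h2]
  · -- uniqueness on the source
    intro p hp hQp
    have h1 : ph p = (p.1, 0) := by rw [hcoe, hΦ_def]; simp [hQp]
    have h2 : ph.symm ((p.1, 0) : E' × ℂ) = p := by rw [← h1]; exact ph.left_inv hp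
    rw [hg_def]
    simp [h2]

end S5
section S6
variable {E' : Type*} [NormedAddCommGroup E'] [NormedSpace ℝ E'] [CompleteSpace E'] {N : ℕ}

set_option maxHeartbeats 1000000 in
lemma interior_of_not_xi (P : E' → Matrix (Fin N) (Fin N) ℂ) {w₀ : E'} {lam0 : ℂ}
    (hmem : (w₀, lam0) ∈ OmegaSet P 1) (hnxi : (w₀, lam0) ∉ XiSet P)
    (m : ℕ) (hm : 2 ≤ m) (hΩ : (w₀, lam0) ∈ OmegaSet P m) :
    ∃ V : Set (E' × ℂ), IsOpen V ∧ (w₀, lam0) ∈ V ∧ V ∩ OmegaSet P 1 ⊆ OmegaSet P m := by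
  set Sm : Set (OmegaSet P 1) := {q : OmegaSet P 1 | (q : E' × ℂ) ∈ OmegaSet P m} with hSm
  set aa : OmegaSet P 1 := ⟨(w₀, lam0), hmem⟩ with haa
  have hfr : aa ∉ frontier Sm := by
    intro hfr
    exact hnxi (Set.mem_iUnion.mpr ⟨m, Set.mem_iUnion.mpr ⟨hm, ⟨aa, hfr, rfl⟩⟩⟩)
  have hmemSm : aa ∈ Sm := hΩ
  have hint : aa ∈ interior Sm := by
    rw [← closure_diff_frontier]
    exact ⟨subset_closure hmemSm, hfr⟩
  have hnhds : Sm ∈ 𝓝 aa := mem_interior_iff_mem_nhds.mp hint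
  rw [mem_nhds_subtype] at hnhds
  obtain ⟨t, ht, hsub⟩ := hnhds
  refine ⟨interior t, isOpen_interior, mem_interior_iff_mem_nhds.mpr ht, ?_⟩
  rintro ⟨w, z⟩ ⟨hVt, hΩ1⟩
  exact hsub (Set.mem_preimage.mpr (interior_subset hVt) : (⟨(w, z), hΩ1⟩ : OmegaSet P 1) ∈ _)

lemma aux1 (P : E' → Matrix (Fin N) (Fin N) ℂ)
    (hsm : ∀ i j, ContDiff ℝ (⊤:ℕ∞) fun w => P w i j)
    (w₀ : E') (lam0 : ℂ) (h : (w₀, lam0) ∈ OmegaSet P 1 \ XiSet P) :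
    ∃ (U : Set E') (ε : ℝ) (lamf : E' → ℂ), IsOpen U ∧ w₀ ∈ U ∧ 0 < ε ∧
      ContDiffOn ℝ (⊤:ℕ∞) lamf U ∧ lamf w₀ = lam0 ∧
      ∀ w ∈ U, ∀ μ ∈ Metric.ball lam0 ε, (charDet P w μ = 0 ↔ μ = lamf w) := by
  obtain ⟨hmem, hnxi⟩ := h
  set m := KP P w₀ lam0 with hm_def
  have hm1 : 1 ≤ m := hmem
  have hvanish : ∀ j < m, iteratedDeriv j (charDet P w₀) lam0 = 0 :=
    (le_KP_iff P w₀ lam0 m).mp le_rfl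
  have hm_ne : iteratedDeriv m (charDet P w₀) lam0 ≠ 0 := by
    have hnot : ¬ (m + 1 ≤ KP P w₀ lam0) := by omega
    rw [le_KP_iff] at hnot
    push_neg at hnot
    obtain ⟨j, hj, hne⟩ := hnot
    rcases Nat.lt_or_ge j m with hlt | hge
    · exact absurd (hvanish j hlt) hne
    · have : j = m := by omega
      rwa [this] at hne
  -- the relative-interior neighborhood V₁
  have hV₁ : ∃ V₁ : Set (E' × ℂ), IsOpen V₁ ∧ (w₀, lam0) ∈ V₁ ∧
      V₁ ∩ OmegaSet P 1 ⊆ OmegaSet P m := by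
    rcases eq_or_lt_of_le hm1 with heq | hlt
    · exact ⟨Set.univ, isOpen_univ, Set.mem_univ _, by
        intro p hp
        rw [OmegaSet, Set.mem_setOf_eq, ← heq]
        exact hp.2⟩
    · exact interior_of_not_xi P hmem hnxi m hlt (show m ≤ KP P w₀ lam0 from le_rfl)
  obtain ⟨V₁, hV₁o, hV₁m, hV₁sub⟩ := hV₁
  -- the implicit function
  set Q : E' × ℂ → ℂ := fun p => (Polynomial.derivative^[m-1] (polOf (P p.1))).eval p.2 with hQdef
  set Qz : E' × ℂ → ℂ := fun p => (Polynomial.derivative^[m] (polOf (P p.1))).eval p.2 with hQzdef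
  have hQsm : ContDiff ℝ (⊤:ℕ∞) Q := contDiff_q P hsm (m-1)
  have hQz : ∀ p : E' × ℂ, HasDerivAt (fun z => Q (p.1, z)) (Qz p) p.2 := by
    intro p
    have h1 := Polynomial.hasDerivAt (Polynomial.derivative^[m-1] (polOf (P p.1))) p.2
    have h2 : Polynomial.derivative (Polynomial.derivative^[m-1] (polOf (P p.1)))
        = Polynomial.derivative^[m] (polOf (P p.1)) := by
      rw [← Function.iterate_succ_apply' Polynomial.derivative]
      congr 1
      omega
    rwa [h2] at h1
  have hQzc : Continuous Qz := (contDiff_q P hsm m).continuous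
  have hQiter : ∀ p : E' × ℂ, Q p = iteratedDeriv (m-1) (charDet P p.1) p.2 :=
    fun p => (iteratedDeriv_charDet P p.1 (m-1) p.2).symm
  have hQa : Q (w₀, lam0) = 0 := by
    rw [hQiter]
    exact hvanish (m-1) (by omega)
  have hQza : Qz (w₀, lam0) ≠ 0 := by
    have : Qz (w₀, lam0) = iteratedDeriv m (charDet P w₀) lam0 :=
      (iteratedDeriv_charDet P w₀ m lam0).symm
    rwa [this]
  obtain ⟨V, hVo, hVm, O, hOo, hOm, g, hg, hga, hguniq⟩ :=
    ift_graph (E' := E') Q hQsm Qz hQz hQzc (w₀, lam0) hQa hQza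
  -- choose ε with ball ⊆ V ∩ V₁
  have hVV₁ : IsOpen (V ∩ V₁) := hVo.inter hV₁o
  obtain ⟨ε, hε, hball⟩ := Metric.isOpen_iff.mp hVV₁ (w₀, lam0) ⟨hVm, hV₁m⟩
  have hprodball : (Metric.ball w₀ ε) ×ˢ (Metric.ball lam0 ε) ⊆ V ∩ V₁ := by
    rw [ball_prod_same]
    exact hball
  -- smallness region for root existence
  have hcd0 : charDet P w₀ lam0 = 0 := by
    have := hvanish 0 (by omega)
    rwa [iteratedDeriv_zero] at this
  have hcontw : Continuous fun w => ‖charDet P w lam0‖ :=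
    (continuous_norm).comp (contDiff_charDet_fixed P hsm lam0).continuous
  set U₂ : Set E' := (fun w => ‖charDet P w lam0‖) ⁻¹' (Set.Iio (ε ^ N)) with hU₂def
  have hU₂o : IsOpen U₂ := hcontw.isOpen_preimage _ isOpen_Iio
  have hU₂m : w₀ ∈ U₂ := by
    simp only [hU₂def, Set.mem_preimage, Set.mem_Iio, hcd0, norm_zero]
    positivity
  set U : Set E' := O ∩ Metric.ball w₀ ε ∩ U₂ with hUdef
  refine ⟨U, ε, g, (hOo.inter Metric.isOpen_ball).inter hU₂o,
    ⟨⟨hOm, Metric.mem_ball_self hε⟩, hU₂m⟩, hε, ?_, hga, ?_⟩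
  · exact fun w hw => (hg w hw.1.1).contDiffWithinAt
  · intro w hw μ hμ
    obtain ⟨⟨hwO, hwball⟩, hwU₂⟩ := hw
    -- any characteristic root in the ball equals g w
    have hzero : ∀ r ∈ Metric.ball lam0 ε, charDet P w r = 0 → r = g w := by
      intro r hr hcd
      have hpair : ((w, r) : E' × ℂ) ∈ V ∩ V₁ :=
        hprodball (Set.mk_mem_prod hwball hr)
      have hΩ1 : ((w, r) : E' × ℂ) ∈ OmegaSet P 1 := by
        rw [OmegaSet, Set.mem_setOf_eq, le_KP_iff]
        intro j hj
        have : j = 0 := by omega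
        rw [this, iteratedDeriv_zero]
        exact hcd
      have hΩm : ((w, r) : E' × ℂ) ∈ OmegaSet P m := hV₁sub ⟨hpair.2, hΩ1⟩
      have hQwr : Q (w, r) = 0 := by
        rw [hQiter]
        exact (le_KP_iff P w r m).mp hΩm (m-1) (by omega)
      exact hguniq (w, r) hpair.1 hQwr
    constructor
    · intro hcd
      exact hzero μ hμ hcd
    · intro hμeq
      have hsmall : ‖(P w - lam0 • (1 : Matrix (Fin N) (Fin N) ℂ)).det‖ < ε ^ N :=
        hwU₂
      obtain ⟨r, hrdet, hrnear⟩ := exists_root_near (P w) lam0 ε hε hsmall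
      have hrball : r ∈ Metric.ball lam0 ε := by
        rw [Metric.mem_ball, Complex.dist_eq]
        exact hrnear
      have := hzero r hrball hrdet
      rw [hμeq, ← this]
      exact hrdet

end S6
section S7
variable {E' : Type*} [NormedAddCommGroup E'] [NormedSpace ℝ E'] [CompleteSpace E']
  [ProperSpace E'] {N : ℕ}

lemma part2 (P : E' → Matrix (Fin N) (Fin N) ℂ)
    (hsm : ∀ i j, ContDiff ℝ (⊤:ℕ∞) fun w => P w i j)
    (lam0 : ℂ) (h : lam0 ∈ SigmaSet P \ (SigmaWs P ∪ SigmaInf P)) :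
    ∃ U : Set E', IsOpen U ∧ SigmaLam P lam0 ⊆ U ∧
      ∃ W ∈ 𝓝ˢ (SigmaLam P lam0 ×ˢ ({lam0} : Set ℂ)),
      ∃ lamf : E' → ℂ,
        ContDiffOn ℝ (⊤:ℕ∞) lamf U ∧
        ∀ p ∈ W, (charDet P p.1 p.2 = 0 ↔ p.2 = lamf p.1) := by
  classical
  have hnws : lam0 ∉ SigmaWs P := fun hh => h.2 (Or.inl hh)
  have hninf : lam0 ∉ SigmaInf P := fun hh => h.2 (Or.inr hh)
  set S : Set E' := SigmaLam P lam0 with hS_def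
  rcases Set.eq_empty_or_nonempty S with hSe | hSne
  · refine ⟨∅, isOpen_empty, by rw [hSe], ∅, ?_, 0,
      (by intro x hx; exact absurd hx (Set.notMem_empty x)),
      fun p hp => absurd hp (Set.notMem_empty p)⟩
    have h2 : S ×ˢ ({lam0} : Set ℂ) = ∅ := by rw [hSe, Set.empty_prod]
    rw [show SigmaLam P lam0 ×ˢ ({lam0} : Set ℂ) = (∅ : Set (E' × ℂ)) from h2, nhdsSet_empty]
    exact Filter.mem_bot
  -- S is bounded
  have hbdd : Bornology.IsBounded S := by
    by_contra hb
    rw [isBounded_iff_forall_norm_le] at hb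
    push_neg at hb
    have hw : ∀ j : ℕ, ∃ w ∈ S, (j : ℝ) < ‖w‖ := fun j => hb j
    choose w hwS hwn using hw
    have hdet : ∀ j, (P (w j) - lam0 • (1 : Matrix (Fin N) (Fin N) ℂ)).det = 0 :=
      fun j => hwS j
    have hu : ∀ j, ∃ u : Fin N → ℂ, u ≠ 0 ∧
        (P (w j) - lam0 • (1 : Matrix (Fin N) (Fin N) ℂ)) *ᵥ u = 0 := by
      intro j
      obtain ⟨v, hv0, hv⟩ := (Matrix.exists_mulVec_eq_zero_iff).mpr (hdet j)
      exact ⟨v, hv0, hv⟩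
    choose u hu0 huv using hu
    apply hninf
    refine ⟨w, fun j => (WithLp.equiv 2 (Fin N → ℂ)).symm (u j), ?_, ?_, ?_⟩
    · intro j hj
      apply hu0 j
      have := congrArg (WithLp.equiv 2 (Fin N → ℂ)) hj
      simpa using this
    · exact tendsto_atTop_mono (fun j => (hwn j).le) tendsto_natCast_atTop_atTop
    · have hzero : ∀ j, Matrix.toEuclideanLin (P (w j))
          ((WithLp.equiv 2 (Fin N → ℂ)).symm (u j))
          - lam0 • (WithLp.equiv 2 (Fin N → ℂ)).symm (u j) = 0 := by
        intro j
        rw [WithLp.equiv_symm_apply, Matrix.toEuclideanLin_apply_piLp_toLp]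
        have hmv : (P (w j)) *ᵥ (u j) - lam0 • (u j) = 0 := by
          have := huv j
          rwa [Matrix.sub_mulVec, Matrix.smul_mulVec, Matrix.one_mulVec] at this
        have : (P (w j)) *ᵥ (u j) = lam0 • (u j) := by
          rwa [sub_eq_zero] at hmv
        rw [this]
        simp [WithLp.toLp_smul]
      have : (fun j => ‖Matrix.toEuclideanLin (P (w j))
          ((WithLp.equiv 2 (Fin N → ℂ)).symm (u j))
          - lam0 • (WithLp.equiv 2 (Fin N → ℂ)).symm (u j)‖
          / ‖(WithLp.equiv 2 (Fin N → ℂ)).symm (u j)‖) = fun _ => (0:ℝ) := by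
        funext j
        rw [hzero j]
        simp
      rw [this]
      exact tendsto_const_nhds
  have hScl : IsClosed S := by
    have : S = (fun w => charDet P w lam0) ⁻¹' {0} := rfl
    rw [this]
    exact IsClosed.preimage (contDiff_charDet_fixed P hsm lam0).continuous isClosed_singleton
  have hScomp : IsCompact S := Metric.isCompact_of_isClosed_isBounded hScl hbdd
  -- local data from aux1
  have Hloc : ∀ w ∈ S, ∃ (U : Set E') (ε : ℝ) (lamf : E' → ℂ), IsOpen U ∧ w ∈ U ∧ 0 < ε ∧
      ContDiffOn ℝ (⊤:ℕ∞) lamf U ∧ lamf w = lam0 ∧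
      ∀ w' ∈ U, ∀ μ ∈ Metric.ball lam0 ε, (charDet P w' μ = 0 ↔ μ = lamf w') := by
    intro w hw
    apply aux1 P hsm w lam0
    constructor
    · rw [OmegaSet, Set.mem_setOf_eq, le_KP_iff]
      intro j hj
      have : j = 0 := by omega
      rw [this, iteratedDeriv_zero]
      exact hw
    · intro hXi
      exact hnws ⟨(w, lam0), hXi, rfl⟩
  choose! Uf εf lamF hUo hUm hεp hcd hval hgraph using Hloc
  -- finite subcover
  obtain ⟨b, hbS, hbfin, hbcov⟩ := hScomp.elim_finite_subcover_image
    (fun w hw => hUo w hw) (fun x hx => Set.mem_biUnion hx (hUm x hx))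
  set t : Finset E' := hbfin.toFinset with ht_def
  have htS : ∀ i ∈ t, i ∈ S := fun i hi => hbS (hbfin.mem_toFinset.mp hi)
  have htcov : S ⊆ ⋃ i ∈ t, Uf i := by
    intro x hx
    obtain ⟨i, hi, hxi⟩ := Set.mem_iUnion₂.mp (hbcov hx)
    exact Set.mem_iUnion₂.mpr ⟨i, hbfin.mem_toFinset.mpr hi, hxi⟩
  have htne : t.Nonempty := by
    obtain ⟨x, hx⟩ := hSne
    obtain ⟨i, hi, _⟩ := Set.mem_iUnion₂.mp (htcov hx)
    exact ⟨i, hi⟩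
  set ε : ℝ := t.inf' htne εf with hε_def
  have hεpos : 0 < ε := by
    rw [hε_def, Finset.lt_inf'_iff]
    exact fun i hi => hεp i (htS i hi)
  have hεle : ∀ i ∈ t, ε ≤ εf i := fun i hi => Finset.inf'_le _ hi
  -- shrunken opens
  set V : E' → Set E' := fun i => Uf i ∩ lamF i ⁻¹' Metric.ball lam0 ε with hV_def
  have hVo : ∀ i ∈ t, IsOpen (V i) := by
    intro i hi
    exact ContinuousOn.isOpen_inter_preimage (hcd i (htS i hi)).continuousOn
      (hUo i (htS i hi)) Metric.isOpen_ball
  have hVsub : ∀ i, V i ⊆ Uf i := fun i => Set.inter_subset_left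
  -- value lam0 on S points
  have hSval : ∀ i ∈ t, ∀ w ∈ S, w ∈ Uf i → lamF i w = lam0 := by
    intro i hi w hw hwU
    have := (hgraph i (htS i hi) w hwU lam0 (Metric.mem_ball_self (hεp i (htS i hi)))).mp hw
    exact this.symm
  have hScov : S ⊆ ⋃ i ∈ t, V i := by
    intro x hx
    obtain ⟨i, hi, hxi⟩ := Set.mem_iUnion₂.mp (htcov hx)
    refine Set.mem_iUnion₂.mpr ⟨i, hi, hxi, ?_⟩
    simp only [Set.mem_preimage, hSval i hi x hx hxi]
    exact Metric.mem_ball_self hεpos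
  -- agreement on overlaps
  have hagree : ∀ i ∈ t, ∀ j ∈ t, ∀ w, w ∈ V i → w ∈ V j → lamF i w = lamF j w := by
    intro i hi j hj w hwi hwj
    have h1 : charDet P w (lamF i w) = 0 := by
      refine (hgraph i (htS i hi) w hwi.1 (lamF i w) ?_).mpr rfl
      exact Metric.ball_subset_ball (hεle i hi) hwi.2
    exact ((hgraph j (htS j hj) w hwj.1 (lamF i w)
      (Metric.ball_subset_ball (hεle j hj) hwi.2)).mp h1)
  -- the glued function
  set lamf : E' → ℂ := fun w =>
    if hsel : ∃ i, i ∈ t ∧ w ∈ V i then lamF hsel.choose w else 0 with hlamf_def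
  have hlamf_eq : ∀ i ∈ t, ∀ w ∈ V i, lamf w = lamF i w := by
    intro i hi w hw
    have hsel : ∃ i', i' ∈ t ∧ w ∈ V i' := ⟨i, hi, hw⟩
    rw [hlamf_def]
    simp only [dif_pos hsel]
    exact hagree _ hsel.choose_spec.1 i hi w hsel.choose_spec.2 hw
  refine ⟨⋃ i ∈ t, V i, isOpen_biUnion (fun i hi => hVo i hi), hScov,
    ⋃ i ∈ t, (V i) ×ˢ Metric.ball lam0 ε, ?_, lamf, ?_, ?_⟩
  · apply (IsOpen.mem_nhdsSet (isOpen_biUnion (fun i hi => (hVo i hi).prod Metric.isOpen_ball))).mpr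
    intro p hp
    obtain ⟨hp1, hp2⟩ := Set.mem_prod.mp hp
    obtain ⟨i, hi, hpi⟩ := Set.mem_iUnion₂.mp (hScov hp1)
    refine Set.mem_iUnion₂.mpr ⟨i, hi, Set.mk_mem_prod hpi ?_⟩
    rw [Set.mem_singleton_iff.mp hp2]
    exact Metric.mem_ball_self hεpos
  · -- smoothness
    intro w hw
    obtain ⟨i, hi, hwi⟩ := Set.mem_iUnion₂.mp hw
    have hCA : ContDiffAt ℝ (⊤:ℕ∞) (lamF i) w :=
      (hcd i (htS i hi)).contDiffAt ((hUo i (htS i hi)).mem_nhds (hVsub i hwi))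
    have heq : lamf =ᶠ[𝓝 w] lamF i := by
      filter_upwards [(hVo i hi).mem_nhds hwi] with w' hw'
      exact hlamf_eq i hi w' hw'
    exact (hCA.congr_of_eventuallyEq heq).contDiffWithinAt
  · -- graph property
    intro p hp
    obtain ⟨i, hi, hpi⟩ := Set.mem_iUnion₂.mp hp
    obtain ⟨hp1, hp2⟩ := Set.mem_prod.mp hpi
    rw [hlamf_eq i hi p.1 hp1]
    exact hgraph i (htS i hi) p.1 hp1.1 p.2 (Metric.ball_subset_ball (hεle i hi) hp2)

end S7
lemma uniq_germ {E' : Type*} [NormedAddCommGroup E'] [NormedSpace ℝ E'] {N : ℕ}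
    (P : E' → Matrix (Fin N) (Fin N) ℂ) (w₀ : E') (lam0 : ℂ)
    (lam₁ lam₂ : E' → ℂ)
    (h₁s : ∃ U₁ ∈ 𝓝 w₀, ContDiffOn ℝ (⊤:ℕ∞) lam₁ U₁) (h₁v : lam₁ w₀ = lam0)
    (h₁g : ∃ W₁ ∈ 𝓝 ((w₀, lam0) : E' × ℂ), ∀ p ∈ W₁, (charDet P p.1 p.2 = 0 ↔ p.2 = lam₁ p.1))
    (h₂g : ∃ W₂ ∈ 𝓝 ((w₀, lam0) : E' × ℂ), ∀ p ∈ W₂, (charDet P p.1 p.2 = 0 ↔ p.2 = lam₂ p.1)) :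
    lam₁ =ᶠ[𝓝 w₀] lam₂ := by
  obtain ⟨U₁, hU₁, hcd₁⟩ := h₁s
  obtain ⟨W₁, hW₁, hg₁⟩ := h₁g
  obtain ⟨W₂, hW₂, hg₂⟩ := h₂g
  have hcont : ContinuousAt lam₁ w₀ := (hcd₁.contDiffAt hU₁).continuousAt
  have hF : ContinuousAt (fun w => ((w, lam₁ w) : E' × ℂ)) w₀ :=
    continuousAt_id.prodMk hcont
  have hFv : ((w₀, lam₁ w₀) : E' × ℂ) = (w₀, lam0) := by rw [h₁v]
  have hev : ∀ᶠ w in 𝓝 w₀, ((w, lam₁ w) : E' × ℂ) ∈ W₁ ∩ W₂ := by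
    have := hF.preimage_mem_nhds (by rw [hFv] at *; exact Filter.inter_mem hW₁ hW₂)
    exact this
  filter_upwards [hev] with w hw
  have hcd : charDet P w (lam₁ w) = 0 := (hg₁ _ hw.1).mpr rfl
  exact (hg₂ _ hw.2).mp hcd

end GermEV

/-- **Lemma 2.15.** (1) If `(w₀, λ₀) ∈ Ω₁(P) \ Ξ(P)` then near `(w₀, λ₀)` the characteristic
set is the graph of a unique smooth germ of eigenvalues `λ(w)` with `λ(w₀) = λ₀`.
(2) If `λ₀ ∈ Σ(P) \ (Σ_ws(P) ∪ Σ_∞(P))` then there is a smooth `λ(w)` on a neighborhood of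
`Σ_{λ₀}(P)` whose graph is the characteristic set near `Σ_{λ₀}(P) × {λ₀}`. -/
theorem germ_of_eigenvalues {d N : ℕ}
    (P : EuclideanSpace ℝ (Fin d) → Matrix (Fin N) (Fin N) ℂ)
    (hsmooth : ∀ i j, ContDiff ℝ (⊤ : ℕ∞) fun w => P w i j) :
    (∀ (w₀ : EuclideanSpace ℝ (Fin d)) (lam₀ : ℂ),
      (w₀, lam₀) ∈ OmegaSet P 1 \ XiSet P →
      ((∃ U ∈ 𝓝 w₀, ∃ W ∈ 𝓝 (w₀, lam₀), ∃ lamf : EuclideanSpace ℝ (Fin d) → ℂ,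
          ContDiffOn ℝ (⊤ : ℕ∞) lamf U ∧ lamf w₀ = lam₀ ∧
          ∀ p ∈ W, (charDet P p.1 p.2 = 0 ↔ p.2 = lamf p.1)) ∧
        (∀ lam₁ lam₂ : EuclideanSpace ℝ (Fin d) → ℂ,
          (∃ U₁ ∈ 𝓝 w₀, ContDiffOn ℝ (⊤ : ℕ∞) lam₁ U₁) → lam₁ w₀ = lam₀ →
          (∃ W₁ ∈ 𝓝 (w₀, lam₀), ∀ p ∈ W₁, (charDet P p.1 p.2 = 0 ↔ p.2 = lam₁ p.1)) →
          (∃ U₂ ∈ 𝓝 w₀, ContDiffOn ℝ (⊤ : ℕ∞) lam₂ U₂) → lam₂ w₀ = lam₀ →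
          (∃ W₂ ∈ 𝓝 (w₀, lam₀), ∀ p ∈ W₂, (charDet P p.1 p.2 = 0 ↔ p.2 = lam₂ p.1)) →
          lam₁ =ᶠ[𝓝 w₀] lam₂))) ∧
    (∀ lam₀ : ℂ, lam₀ ∈ SigmaSet P \ (SigmaWs P ∪ SigmaInf P) →
      ∃ U : Set (EuclideanSpace ℝ (Fin d)), IsOpen U ∧ SigmaLam P lam₀ ⊆ U ∧
      ∃ W ∈ 𝓝ˢ (SigmaLam P lam₀ ×ˢ ({lam₀} : Set ℂ)),
      ∃ lamf : EuclideanSpace ℝ (Fin d) → ℂ,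
        ContDiffOn ℝ (⊤ : ℕ∞) lamf U ∧
        ∀ p ∈ W, (charDet P p.1 p.2 = 0 ↔ p.2 = lamf p.1)) := by
  constructor
  · intro w₀ lam0 hmem
    constructor
    · obtain ⟨U, ε, lamf, hUo, hUm, hε, hcd, hval, hgraph⟩ :=
        GermEV.aux1 P hsmooth w₀ lam0 hmem
      refine ⟨U, hUo.mem_nhds hUm, U ×ˢ Metric.ball lam0 ε,
        prod_mem_nhds (hUo.mem_nhds hUm) (Metric.ball_mem_nhds _ hε), lamf, hcd, hval, ?_⟩
      intro p hp
      exact hgraph p.1 hp.1 p.2 hp.2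
    · intro lam₁ lam₂ h₁s h₁v h₁g _h₂s _h₂v h₂g
      exact GermEV.uniq_germ P w₀ lam0 lam₁ lam₂ h₁s h₁v h₁g h₂g
  · intro lam0 hlam
    exact GermEV.part2 P hsmooth lam0 hlam
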